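/- Let m be a positive integer with base-p expansion m = a_0 + a_1 p + ⋯ + a_n p^n. Then the multinomial coefficient m!/( (1!)^{a_0} (p!)^{a_1} ⋯ (p^n!)^{a_n} ) (the number of ways to partition an m-set into a_0 blocks of size 1, a_1 blocks of size p, …, a_n blocks of size p^n, with blocks of equal size unordered) counted as m!/(Π_i (p^i!)^{a_i}) is not divisible by p. -/

import Mathlib

open Finset

private lemma ofDigits_eq_sum' (b : ℕ) (L : List ℕ) :
    Nat.ofDigits b L = ∑ i ∈ Finset.range L.length, L.getD i 0 * b ^ i := by
  induction L with
  | nil => simp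
  | cons d L ih =>
      rw [Nat.ofDigits_cons, List.length_cons, Finset.sum_range_succ']
      simp only [List.getD_cons_succ, List.getD_cons_zero, pow_zero, mul_one, pow_succ, ih,
        Finset.mul_sum]
      rw [Nat.add_comm]
      congr 1
      exact Finset.sum_congr rfl fun x _ => by ring

private lemma list_sum_eq_sum' (L : List ℕ) :
    L.sum = ∑ i ∈ Finset.range L.length, L.getD i 0 := by
  induction L with
  | nil => simp
  | cons d L ih =>
      rw [List.sum_cons, List.length_cons, Finset.sum_range_succ']
      simp [ih, Nat.add_comm]

private lemma prod_pow_factorial_dvd' (p : ℕ) (n : ℕ) (a : ℕ → ℕ) :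
    (∏ i ∈ Finset.range n, (Nat.factorial (p ^ i)) ^ (a i)) ∣
      Nat.factorial (∑ i ∈ Finset.range n, a i * p ^ i) := by
  have key := Nat.prod_factorial_dvd_factorial_sum
    ((Finset.range n).sigma fun i => Finset.range (a i)) (fun x => p ^ x.1)
  rw [Finset.prod_sigma, Finset.sum_sigma] at key
  simpa [Finset.prod_const, Finset.sum_const, Finset.card_range, smul_eq_mul, mul_comm] using key

/-- Kummer-type theorem: if `m = a_0 + a_1 p + ⋯ + a_n pⁿ` is the base-`p`
expansion of `m` (`p` prime), then the multinomial coefficient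
`m! / ((1!)^{a_0} (p!)^{a_1} ⋯ (pⁿ!)^{a_n})` is an integer not divisible by `p`. -/
theorem multinomial_of_digits_not_dvd (p m : ℕ) (hp : p.Prime) (hm : m ≠ 0) :
    (∏ i ∈ Finset.range (Nat.digits p m).length,
        (Nat.factorial (p ^ i)) ^ ((Nat.digits p m).getD i 0)) ∣ Nat.factorial m ∧
    ¬ p ∣ Nat.factorial m /
        ∏ i ∈ Finset.range (Nat.digits p m).length,
          (Nat.factorial (p ^ i)) ^ ((Nat.digits p m).getD i 0) := by
  haveI : Fact p.Prime := ⟨hp⟩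
  set L := Nat.digits p m with hL
  set D := ∏ i ∈ Finset.range L.length, (Nat.factorial (p ^ i)) ^ (L.getD i 0) with hD
  have hsum : m = ∑ i ∈ Finset.range L.length, L.getD i 0 * p ^ i := by
    conv_lhs => rw [← Nat.ofDigits_digits p m]
    exact ofDigits_eq_sum' p L
  have hdvd : D ∣ Nat.factorial m := by
    rw [hsum]; exact prod_pow_factorial_dvd' p L.length _
  refine ⟨hdvd, ?_⟩
  have hD0 : D ≠ 0 := Finset.prod_ne_zero_iff.mpr fun i _ =>
    pow_ne_zero _ (Nat.factorial_ne_zero _)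
  -- valuation of D
  have hdigpow : ∀ i : ℕ, (Nat.digits p (p ^ i)).sum = 1 := by
    intro i
    have : p ^ i = p ^ i * 1 := (mul_one _).symm
    rw [this, Nat.digits_base_pow_mul hp.one_lt one_pos]
    have h1 : 1 / p = 0 := Nat.div_eq_of_lt hp.one_lt
    simp [Nat.digits_def' hp.one_lt, h1, Nat.mod_eq_of_lt hp.one_lt]
  have hvD : (p - 1) * padicValNat p D =
      ∑ i ∈ Finset.range L.length, L.getD i 0 * (p ^ i - 1) := by
    have h1 : padicValNat p D = ∑ i ∈ Finset.range L.length,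
        L.getD i 0 * padicValNat p (Nat.factorial (p ^ i)) := by
      rw [← Nat.factorization_def _ hp, hD, Nat.factorization_prod
        (fun i _ => pow_ne_zero _ (Nat.factorial_ne_zero _))]
      simp only [Finset.sum_apply', Nat.factorization_pow, Finsupp.smul_apply, smul_eq_mul]
      exact Finset.sum_congr rfl fun i _ => by rw [Nat.factorization_def _ hp]
    rw [h1, Finset.mul_sum]
    refine Finset.sum_congr rfl fun i _ => ?_
    rw [mul_left_comm, sub_one_mul_padicValNat_factorial (p := p) (p ^ i), hdigpow i]
  -- valuation of m!
  have hvM : (p - 1) * padicValNat p (Nat.factorial m) = m - L.sum :=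
    sub_one_mul_padicValNat_factorial (p := p) m
  -- the two right-hand sides agree
  have hkey : ∑ i ∈ Finset.range L.length, L.getD i 0 * (p ^ i - 1) = m - L.sum := by
    have haux : ∀ a q : ℕ, 1 ≤ q → a * (q - 1) + a = a * q := by
      intro a q hq
      obtain ⟨q', rfl⟩ := Nat.exists_eq_add_of_le hq
      simp only [Nat.add_sub_cancel_left, Nat.mul_add, Nat.mul_one]
      ring
    apply Nat.eq_sub_of_add_eq
    rw [list_sum_eq_sum' L, ← Finset.sum_add_distrib]
    rw [hsum]
    exact Finset.sum_congr rfl fun i _ => haux _ _ (Nat.one_le_pow _ _ hp.pos)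
  have hveq : padicValNat p (Nat.factorial m) = padicValNat p D := by
    have hp1 : 0 < p - 1 := by have := hp.two_le; omega
    apply Nat.eq_of_mul_eq_mul_left hp1
    rw [hvM, hvD, hkey]
  -- conclude
  have hq0 : 0 < Nat.factorial m / D :=
    Nat.div_pos (Nat.le_of_dvd (Nat.factorial_pos m) hdvd) (Nat.pos_of_ne_zero hD0)
  intro hpd
  have h1 : 1 ≤ padicValNat p (Nat.factorial m / D) :=
    one_le_padicValNat_of_dvd hq0.ne' hpd
  rw [padicValNat.div_of_dvd hdvd, hveq, Nat.sub_self] at h1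
  exact absurd h1 (by omega)
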